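/- Let B^w be the m×(m−|S|) matrix (columns indexed by the set of mutable indices k, i.e. those k ∈ [1,m] with s(k) < ∞) with entries (B^w)_{jk} = 1 if j = p(k), −1 if j = s(k), a_{i_j i_k} if j < k < s(j) < s(k), −a_{i_j i_k} if k < j < s(k) < s(j), and 0 otherwise, where (a_{rs}) is a symmetrizable generalized Cartan matrix with symmetrizer (d_r). Then the principal square part of B^w (rows and columns both indexed by mutable indices) is skew-symmetrizable, with symmetrizing constants d_{i_k}. -/

import Mathlib

/-- `s(k)`: the least index `j > k` with `i_j = i_k`, or `∞` if none. -/
noncomputable def sfun {m : ℕ} {I : Type*} [DecidableEq I] (w : Fin m → I) (k : Fin m) : ℕ∞ :=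
  WithTop.map Fin.val ((Finset.univ.filter fun j : Fin m => k < j ∧ w j = w k).min)

/-- `p(k)`: the greatest index `j < k` with `i_j = i_k`, or `−∞` if none. -/
noncomputable def pfun {m : ℕ} {I : Type*} [DecidableEq I] (w : Fin m → I) (k : Fin m) :
    WithBot ℕ :=
  WithBot.map Fin.val ((Finset.univ.filter fun j : Fin m => j < k ∧ w j = w k).max)

open Classical in
/-- The matrix `B^w`, with rows indexed by `[1,m]` and columns indexed by the
mutable indices (`k` with `s(k) < ∞`), where `A` is a generalized Cartan matrix. -/
noncomputable def Bw {m : ℕ} {I : Type*} [DecidableEq I] (A : I → I → ℤ) (w : Fin m → I)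
    (j : Fin m) (k : {k : Fin m // sfun w k ≠ ⊤}) : ℤ :=
  if ((j : ℕ) : WithBot ℕ) = pfun w k.1 then 1
  else if ((j : ℕ) : ℕ∞) = sfun w k.1 then -1
  else if j < k.1 ∧ ((k.1 : ℕ) : ℕ∞) < sfun w j ∧ sfun w j < sfun w k.1 then A (w j) (w k.1)
  else if k.1 < j ∧ ((j : ℕ) : ℕ∞) < sfun w k.1 ∧ sfun w k.1 < sfun w j then -A (w j) (w k.1)
  else 0

section Aux
variable {m : ℕ} {I : Type*} [DecidableEq I] {w : Fin m → I}

lemma sfun_le {j k : Fin m} (h : j < k) (he : w k = w j) : sfun w j ≤ ((k : ℕ) : ℕ∞) := by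
  have hk : k ∈ Finset.univ.filter fun l : Fin m => j < l ∧ w l = w j :=
    Finset.mem_filter.2 ⟨Finset.mem_univ _, h, he⟩
  have h1 := Finset.min_le hk
  exact (WithTop.map_le_iff Fin.val (fun {a b} => Iff.rfl)).2 h1

lemma sfun_eq_elim {j k : Fin m} (h : sfun w j = ((k : ℕ) : ℕ∞)) :
    j < k ∧ w k = w j := by
  unfold sfun at h
  rcases hm : (Finset.univ.filter fun l : Fin m => j < l ∧ w l = w j).min with _ | l
  · rw [hm] at h; cases h
  · rw [hm] at h
    have hlk : l = k := Fin.ext (Option.some.inj h)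
    subst hlk
    have := Finset.mem_of_min hm
    simpa using this

lemma sfun_eq_intro {j k : Fin m} (h : j < k) (he : w k = w j)
    (hmin : ∀ l : Fin m, j < l → l < k → w l ≠ w j) : sfun w j = ((k : ℕ) : ℕ∞) := by
  refine le_antisymm (sfun_le h he) ?_
  have h2 : ((k : Fin m) : WithTop (Fin m)) ≤
      (Finset.univ.filter fun l : Fin m => j < l ∧ w l = w j).min := by
    apply Finset.le_min
    intro l hl
    simp only [Finset.mem_filter] at hl
    rcases lt_or_ge l k with hlt | hle
    · exact absurd hl.2.2 (hmin l hl.2.1 hlt)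
    · exact_mod_cast hle
  exact (WithTop.map_le_iff Fin.val (fun {a b} => Iff.rfl)).2 h2

lemma pfun_le {j k : Fin m} (h : j < k) (he : w j = w k) :
    ((j : ℕ) : WithBot ℕ) ≤ pfun w k := by
  have hk : j ∈ Finset.univ.filter fun l : Fin m => l < k ∧ w l = w k :=
    Finset.mem_filter.2 ⟨Finset.mem_univ _, h, he⟩
  have h1 := Finset.le_max hk
  exact (WithBot.map_le_iff Fin.val (fun {a b} => Iff.rfl)).2 h1

lemma pfun_eq_elim {j k : Fin m} (h : pfun w k = ((j : ℕ) : WithBot ℕ)) :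
    j < k ∧ w j = w k := by
  unfold pfun at h
  rcases hm : (Finset.univ.filter fun l : Fin m => l < k ∧ w l = w k).max with _ | l
  · rw [hm] at h; cases h
  · rw [hm] at h
    have hlj : l = j := Fin.ext (Option.some.inj h)
    subst hlj
    have := Finset.mem_of_max hm
    simpa using this

lemma pfun_eq_intro {j k : Fin m} (h : j < k) (he : w j = w k)
    (hmax : ∀ l : Fin m, j < l → l < k → w l ≠ w k) : pfun w k = ((j : ℕ) : WithBot ℕ) := by
  refine le_antisymm ?_ (pfun_le h he)
  have h2 : (Finset.univ.filter fun l : Fin m => l < k ∧ w l = w k).max ≤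
      ((j : Fin m) : WithBot (Fin m)) := by
    apply Finset.max_le
    intro l hl
    simp only [Finset.mem_filter] at hl
    rcases lt_or_ge j l with hlt | hle
    · exact absurd hl.2.2 (hmax l hlt hl.2.1)
    · exact_mod_cast hle
  exact (WithBot.map_le_iff Fin.val (fun {a b} => Iff.rfl)).2 h2

/-- The key duality: `j = p(k)` iff `k = s(j)`. -/
lemma pfun_eq_iff_sfun_eq {j k : Fin m} :
    pfun w k = ((j : ℕ) : WithBot ℕ) ↔ sfun w j = ((k : ℕ) : ℕ∞) := by
  constructor
  · intro h
    obtain ⟨hjk, he⟩ := pfun_eq_elim h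
    refine sfun_eq_intro hjk he.symm ?_
    intro l hjl hlk hle
    have hp := pfun_le hlk (hle.trans he)
    rw [h] at hp
    have : (l : ℕ) ≤ (j : ℕ) := by exact_mod_cast hp
    omega
  · intro h
    obtain ⟨hjk, he⟩ := sfun_eq_elim h
    refine pfun_eq_intro hjk he.symm ?_
    intro l hjl hlk hle
    have hs := sfun_le hjl (hle.trans he)
    rw [h] at hs
    have : (k : ℕ) ≤ (l : ℕ) := by exact_mod_cast hs
    omega

lemma ne_of_lt_sfun {j k : Fin m} (h : j < k) (hlt : ((k : ℕ) : ℕ∞) < sfun w j) :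
    w j ≠ w k := fun he => absurd (sfun_le h he.symm) hlt.not_ge

end Aux

/-- The principal square part of `B^w` (rows and columns both indexed by
mutable indices) is skew-symmetrizable, with symmetrizing constants `d_{i_k}`
coming from a symmetrizer of the generalized Cartan matrix `A`. -/
theorem Bw_principal_skewSymmetrizable {m : ℕ} {I : Type*} [DecidableEq I]
    (A : I → I → ℤ) (d : I → ℤ)
    (hdiag : ∀ r, A r r = 2) (hoff : ∀ r s, r ≠ s → A r s ≤ 0)
    (hdpos : ∀ r, 0 < d r) (hsym : ∀ r s, d r * A r s = d s * A s r)
    (w : Fin m → I) :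
    ∀ j k : {k : Fin m // sfun w k ≠ ⊤},
      d (w j.1) * Bw A w j.1 k = -(d (w k.1) * Bw A w k.1 j) := by
  rintro ⟨j, hj⟩ ⟨k, hk⟩
  simp only [Bw]
  by_cases h1 : ((j : ℕ) : WithBot ℕ) = pfun w k
  · -- j = p(k), hence k = s(j)
    have hs : sfun w j = ((k : ℕ) : ℕ∞) := pfun_eq_iff_sfun_eq.1 h1.symm
    obtain ⟨hjk, he⟩ := pfun_eq_elim h1.symm
    have hnp : ¬ (((k : ℕ) : WithBot ℕ) = pfun w j) := by
      intro h
      exact absurd (pfun_eq_elim h.symm).1 hjk.asymm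
    rw [if_pos h1, if_neg hnp, if_pos hs.symm]
    rw [he]; ring
  by_cases h2 : ((j : ℕ) : ℕ∞) = sfun w k
  · -- j = s(k), hence k = p(j)
    have hp : pfun w j = ((k : ℕ) : WithBot ℕ) := pfun_eq_iff_sfun_eq.2 h2.symm
    obtain ⟨hkj, he⟩ := sfun_eq_elim h2.symm
    rw [if_neg h1, if_pos h2, if_pos hp.symm]
    rw [he]; ring
  by_cases h3 : j < k ∧ ((k : ℕ) : ℕ∞) < sfun w j ∧ sfun w j < sfun w k
  · obtain ⟨hjk, hks, hss⟩ := h3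
    have hne : w j ≠ w k := ne_of_lt_sfun hjk hks
    have hnp : ¬ (((k : ℕ) : WithBot ℕ) = pfun w j) := by
      intro h
      exact absurd (pfun_eq_elim h.symm).1 hjk.asymm
    have hns : ¬ (((k : ℕ) : ℕ∞) = sfun w j) := fun h => absurd h hks.ne
    have hn3 : ¬ (k < j ∧ ((j : ℕ) : ℕ∞) < sfun w k ∧ sfun w k < sfun w j) :=
      fun h => absurd h.1 hjk.asymm
    rw [if_neg h1, if_neg h2, if_pos ⟨hjk, hks, hss⟩, if_neg hnp, if_neg hns, if_neg hn3,
      if_pos ⟨hjk, hks, hss⟩]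
    have := hsym (w j) (w k)
    linarith
  by_cases h4 : k < j ∧ ((j : ℕ) : ℕ∞) < sfun w k ∧ sfun w k < sfun w j
  · obtain ⟨hkj, hjs, hss⟩ := h4
    have hnp : ¬ (((k : ℕ) : WithBot ℕ) = pfun w j) := by
      intro h
      obtain ⟨hlt, he⟩ := pfun_eq_elim h.symm
      exact absurd (sfun_le hkj he.symm) hjs.not_ge
    have hns : ¬ (((k : ℕ) : ℕ∞) = sfun w j) := by
      intro h
      exact absurd (sfun_eq_elim h.symm).1 hkj.asymm
    rw [if_neg h1, if_neg h2, if_neg (fun h => absurd h.1 hkj.asymm),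
      if_pos ⟨hkj, hjs, hss⟩, if_neg hnp, if_neg hns, if_pos ⟨hkj, hjs, hss⟩]
    have := hsym (w j) (w k)
    linarith
  · -- all entries vanish
    have hnp : ¬ (((k : ℕ) : WithBot ℕ) = pfun w j) := by
      intro h
      exact h2 (pfun_eq_iff_sfun_eq.1 h.symm).symm
    have hns : ¬ (((k : ℕ) : ℕ∞) = sfun w j) := by
      intro h
      exact h1 (pfun_eq_iff_sfun_eq.2 h.symm).symm
    rw [if_neg h1, if_neg h2, if_neg h3, if_neg h4, if_neg hnp, if_neg hns,
      if_neg (fun h => h4 h), if_neg (fun h => h3 h)]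
    ring
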